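/- Fix q ∈ (0,1]^K with q_t > 0 for all t, and suppose λ* > 0 satisfies Σ_{t=1}^K π_t·c_t·min(1, √(q_t/(λ*·c_t))) = B̄. Define A by A_t = min(1, √(q_t/(λ*·c_t))). Then A is a budget-feasible allocation rule and V(A,q) ≤ V(A',q) for every budget-feasible allocation rule A' ∈ (0,1]^K; equivalently, Σ_{t=1}^K π_t·q_t/A_t ≤ Σ_{t=1}^K π_t·q_t/A'_t for every A' ∈ (0,1]^K with Σ_{t=1}^K π_t·c_t·A'_t ≤ B̄. -/

import Mathlib

lemma key_ptwise (q c lam a : ℝ) (hq : 0 < q) (hc : 0 < c) (hl : 0 < lam)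
    (ha : 0 < a) (ha1 : a ≤ 1) :
    q / (min 1 (Real.sqrt (q / (lam * c)))) + lam * c * (min 1 (Real.sqrt (q / (lam * c))))
      ≤ q / a + lam * c * a := by
  set s := Real.sqrt (q / (lam * c)) with hs
  have hLpos : 0 < lam * c := mul_pos hl hc
  have hspos : 0 < s := Real.sqrt_pos.2 (div_pos hq hLpos)
  have hu : q / a * a = q := div_mul_cancel₀ q (ne_of_gt ha)
  rcases le_total 1 s with h1 | h1
  · rw [min_eq_left h1]
    have hge : lam * c ≤ q := by
      have : (1:ℝ) ≤ q / (lam * c) := by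
        nlinarith [Real.sq_sqrt (le_of_lt (div_pos hq hLpos)), hspos, h1]
      rwa [le_div_iff₀ hLpos, one_mul] at this
    have hqa : q ≤ q / a := by
      rw [le_div_iff₀ ha]; nlinarith
    nlinarith [mul_nonneg (sub_nonneg.2 (le_trans hge hqa)) (sub_nonneg.2 ha1), hu]
  · rw [min_eq_right h1]
    have hs2 : s ^ 2 = q / (lam * c) := Real.sq_sqrt (le_of_lt (div_pos hq hLpos))
    have hq' : q = lam * c * s ^ 2 := by field_simp at hs2; linarith [hs2]
    have hqs : q / s = lam * c * s := by
      rw [hq']; field_simp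
    rw [hqs]
    nlinarith [mul_nonneg hLpos.le (sq_nonneg (s - a)), hu, ha]

theorem min_player_best_response
    (K : ℕ) (hK : 1 ≤ K) (c π q A : ℕ → ℝ) (Bbar lam : ℝ)
    (hc : ∀ t ∈ Finset.Icc 1 K, 0 < c t)
    (hcmono : ∀ j ∈ Finset.Icc 1 (K - 1), c j < c (j + 1))
    (hπpos : ∀ t ∈ Finset.Icc 1 K, 0 < π t)
    (hπsum : ∑ t ∈ Finset.Icc 1 K, π t = 1)
    (hB : 0 < Bbar)
    (hq : ∀ t ∈ Finset.Icc 1 K, 0 < q t ∧ q t ≤ 1)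
    (hlam : 0 < lam)
    (hbinding : ∑ t ∈ Finset.Icc 1 K, π t * c t * min 1 (Real.sqrt (q t / (lam * c t))) = Bbar)
    (hA : ∀ t ∈ Finset.Icc 1 K, A t = min 1 (Real.sqrt (q t / (lam * c t)))) :
    (∀ t ∈ Finset.Icc 1 K, 0 < A t ∧ A t ≤ 1) ∧
    (∑ t ∈ Finset.Icc 1 K, π t * c t * A t ≤ Bbar) ∧
    (∀ A' : ℕ → ℝ, (∀ t ∈ Finset.Icc 1 K, 0 < A' t ∧ A' t ≤ 1) →
      (∑ t ∈ Finset.Icc 1 K, π t * c t * A' t ≤ Bbar) →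
      ((∑ t ∈ Finset.Icc 1 K, π t * q t / A t)
          - (∑ t ∈ Finset.Icc 1 K, π t * q t) ^ 2
        ≤ (∑ t ∈ Finset.Icc 1 K, π t * q t / A' t)
          - (∑ t ∈ Finset.Icc 1 K, π t * q t) ^ 2) ∧
      (∑ t ∈ Finset.Icc 1 K, π t * q t / A t
        ≤ ∑ t ∈ Finset.Icc 1 K, π t * q t / A' t)) := by
  have hAbound : ∀ t ∈ Finset.Icc 1 K, 0 < A t ∧ A t ≤ 1 := by
    intro t ht
    rw [hA t ht]
    constructor
    · exact lt_min one_pos (Real.sqrt_pos.2 (div_pos (hq t ht).1 (mul_pos hlam (hc t ht))))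
    · exact min_le_left _ _
  have hAsum : ∑ t ∈ Finset.Icc 1 K, π t * c t * A t = Bbar := by
    rw [← hbinding]
    exact Finset.sum_congr rfl fun t ht => by rw [hA t ht]
  refine ⟨hAbound, le_of_eq hAsum, ?_⟩
  intro A' hA'b hA'sum
  have main : ∑ t ∈ Finset.Icc 1 K, π t * q t / A t
      ≤ ∑ t ∈ Finset.Icc 1 K, π t * q t / A' t := by
    have step : ∑ t ∈ Finset.Icc 1 K, (π t * q t / A t + lam * (π t * c t * A t))
        ≤ ∑ t ∈ Finset.Icc 1 K, (π t * q t / A' t + lam * (π t * c t * A' t)) := by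
      apply Finset.sum_le_sum
      intro t ht
      have hkey := key_ptwise (q t) (c t) lam (A' t) (hq t ht).1 (hc t ht) hlam
        (hA'b t ht).1 (hA'b t ht).2
      rw [← hA t ht] at hkey
      have hπ := (hπpos t ht).le
      have h1 : π t * q t / A t = π t * (q t / A t) := by ring
      have h2 : π t * q t / A' t = π t * (q t / A' t) := by ring
      rw [h1, h2]
      nlinarith [mul_le_mul_of_nonneg_left hkey hπ]
    rw [Finset.sum_add_distrib, Finset.sum_add_distrib, ← Finset.mul_sum, ← Finset.mul_sum,
      hAsum] at step
    nlinarith [mul_le_mul_of_nonneg_left hA'sum hlam.le]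
  exact ⟨by linarith [main], main⟩
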